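/- arXiv:2206.08996 — 2 statements merged into one kernel-verified Lean document; each statement's English description precedes it below -/
import Mathlib

section
/- Let d_min and d_max be the minimum and maximum weighted degrees of the graph G, and let h_G be its isoperimetric number. Then the second smallest eigenvalue of the combinatorial Laplacian satisfies (1/2)·d_min·h_G² ≤ λ₂(L) ≤ 2·d_max·h_G. -/
open Matrix Finset
open scoped RealInnerProductSpace

noncomputable def deg {n : ℕ} (W : Matrix (Fin n) (Fin n) ℝ) (i : Fin n) : ℝ := ∑ j, W i j

noncomputable def lap {n : ℕ} (W : Matrix (Fin n) (Fin n) ℝ) : Matrix (Fin n) (Fin n) ℝ :=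
  Matrix.diagonal (deg W) - W

noncomputable def mean {n : ℕ} (x : Fin n → ℝ) : ℝ := (∑ i, x i) / n

noncomputable def ctr {n : ℕ} (x : Fin n → ℝ) : Fin n → ℝ := fun i => x i - mean x

noncomputable def pol {n : ℕ} (x : Fin n → ℝ) : ℝ := ∑ i, (x i - mean x) ^ 2

def vij {n : ℕ} (i j : Fin n) : Fin n → ℝ :=
  fun k => (if k = i then (1 : ℝ) else 0) - (if k = j then (1 : ℝ) else 0)

noncomputable def cheeger {n : ℕ} (W : Matrix (Fin n) (Fin n) ℝ) : ℝ :=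
  sInf { r : ℝ | ∃ X : Finset (Fin n), X.Nonempty ∧ X ≠ Finset.univ ∧
    r = (∑ i ∈ X, ∑ j ∈ Xᶜ, W i j) /
      min (∑ i ∈ X, deg W i) (∑ j ∈ Xᶜ, deg W j) }

namespace CheegerAux
variable {n : ℕ} {A : Matrix (Fin n) (Fin n) ℝ} (hA : A.IsHermitian)

lemma coe_sum (s : Finset (Fin n)) (y : Fin n → EuclideanSpace ℝ (Fin n)) :
    ⇑(∑ k ∈ s, y k) = ∑ k ∈ s, ⇑(y k) := WithLp.ofLp_sum (s := s) (f := y)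

lemma inner_eq_dot (x y : EuclideanSpace ℝ (Fin n)) : ⟪x, y⟫ = ⇑x ⬝ᵥ ⇑y := by
  simp [PiLp.inner_apply, dotProduct]
  exact Finset.sum_congr rfl fun i _ => mul_comm _ _

lemma dot_sumv (x : Fin n → ℝ) (y : Fin n → Fin n → ℝ) :
    x ⬝ᵥ (∑ k, y k) = ∑ k, x ⬝ᵥ y k := by
  simp [dotProduct, Finset.sum_apply, Finset.mul_sum]
  exact Finset.sum_comm

lemma mulVec_sumv (y : Fin n → Fin n → ℝ) :
    A *ᵥ (∑ k, y k) = ∑ k, A *ᵥ (y k) := by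
  funext i
  simp [mulVec, dotProduct, Finset.sum_apply, Finset.mul_sum]
  exact Finset.sum_comm

lemma dot_eigen (k l : Fin n) :
    ⇑(hA.eigenvectorBasis k) ⬝ᵥ ⇑(hA.eigenvectorBasis l) = if k = l then (1:ℝ) else 0 := by
  rw [← inner_eq_dot, orthonormal_iff_ite.mp (hA.eigenvectorBasis).orthonormal]

lemma repr_dot (x : EuclideanSpace ℝ (Fin n)) :
    ⇑x = ∑ k, (⇑(hA.eigenvectorBasis k) ⬝ᵥ ⇑x) • ⇑(hA.eigenvectorBasis k) := by
  conv_lhs => rw [← (hA.eigenvectorBasis).sum_repr' x]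
  rw [coe_sum]
  exact Finset.sum_congr rfl fun k _ => by rw [← inner_eq_dot]; rfl

lemma spec_expand (x : EuclideanSpace ℝ (Fin n)) :
    ⇑x ⬝ᵥ (A *ᵥ ⇑x) = ∑ k, hA.eigenvalues k * (⇑(hA.eigenvectorBasis k) ⬝ᵥ ⇑x)^2 := by
  set c : Fin n → ℝ := fun k => ⇑(hA.eigenvectorBasis k) ⬝ᵥ ⇑x with hc
  have hx : ⇑x = ∑ k, c k • ⇑(hA.eigenvectorBasis k) := repr_dot hA x
  calc ⇑x ⬝ᵥ (A *ᵥ ⇑x)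
      = ⇑x ⬝ᵥ (A *ᵥ ∑ k, c k • ⇑(hA.eigenvectorBasis k)) := by rw [← hx]
    _ = ⇑x ⬝ᵥ (∑ k, c k • (hA.eigenvalues k • ⇑(hA.eigenvectorBasis k))) := by
        rw [mulVec_sumv]; congr 1
        exact Finset.sum_congr rfl fun k _ => by rw [mulVec_smul, hA.mulVec_eigenvectorBasis]
    _ = ∑ k, hA.eigenvalues k * (c k * (⇑x ⬝ᵥ ⇑(hA.eigenvectorBasis k))) := by
        rw [dot_sumv]
        exact Finset.sum_congr rfl fun k _ => by
          rw [dotProduct_smul, dotProduct_smul]; simp [smul_eq_mul]; ring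
    _ = ∑ k, hA.eigenvalues k * (c k)^2 :=
        Finset.sum_congr rfl fun k _ => by rw [dotProduct_comm]; ring

lemma dot_self_expand (x : EuclideanSpace ℝ (Fin n)) :
    ⇑x ⬝ᵥ ⇑x = ∑ k, (⇑(hA.eigenvectorBasis k) ⬝ᵥ ⇑x)^2 := by
  set c : Fin n → ℝ := fun k => ⇑(hA.eigenvectorBasis k) ⬝ᵥ ⇑x with hc
  have hx : ⇑x = ∑ k, c k • ⇑(hA.eigenvectorBasis k) := repr_dot hA x
  calc ⇑x ⬝ᵥ ⇑x = ⇑x ⬝ᵥ ∑ k, c k • ⇑(hA.eigenvectorBasis k) := by rw [← hx]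
    _ = ∑ k, c k * (⇑x ⬝ᵥ ⇑(hA.eigenvectorBasis k)) := by
        rw [dot_sumv]
        exact Finset.sum_congr rfl fun k _ => by rw [dotProduct_smul]; simp [smul_eq_mul]
    _ = ∑ k, (c k)^2 := Finset.sum_congr rfl fun k _ => by rw [dotProduct_comm]; ring



section Graph
variable {n : ℕ} {W : Matrix (Fin n) (Fin n) ℝ}

lemma lap_mulVec (x : Fin n → ℝ) (i : Fin n) :
    (lap W *ᵥ x) i = deg W i * x i - ∑ j, W i j * x j := by
  simp [lap, mulVec, dotProduct, sub_mul, Finset.sum_sub_distrib, diagonal, Finset.sum_ite_eq,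
    ite_mul]

lemma dot_lap_eq (hsymm : W.IsSymm) (x : Fin n → ℝ) :
    x ⬝ᵥ (lap W *ᵥ x) = (1/2) * ∑ i, ∑ j, W i j * (x i - x j)^2 := by
  have hsym : ∀ i j, W j i = W i j := fun i j => congrFun (congrFun hsymm.eq i) j
  have h1 : ∑ i, ∑ j, W i j * (x j)^2 = ∑ i, ∑ j, W i j * (x i)^2 := by
    rw [Finset.sum_comm]
    exact Finset.sum_congr rfl fun i _ => Finset.sum_congr rfl fun j _ => by rw [hsym i j]
  have lhs : x ⬝ᵥ (lap W *ᵥ x)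
      = (∑ i, ∑ j, W i j * (x i)^2) - ∑ i, ∑ j, W i j * (x i * x j) := by
    simp only [dotProduct]
    rw [← Finset.sum_sub_distrib]
    refine Finset.sum_congr rfl fun i _ => ?_
    rw [← Finset.sum_sub_distrib, lap_mulVec, deg, Finset.sum_mul, mul_sub, Finset.mul_sum,
      Finset.mul_sum, ← Finset.sum_sub_distrib]
    exact Finset.sum_congr rfl fun j _ => by ring
  have rhs : ∑ i, ∑ j, W i j * (x i - x j)^2
      = (∑ i, ∑ j, W i j * (x i)^2) + (∑ i, ∑ j, W i j * (x j)^2)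
        - 2 * ∑ i, ∑ j, W i j * (x i * x j) := by
    rw [Finset.mul_sum, ← Finset.sum_add_distrib, ← Finset.sum_sub_distrib]
    refine Finset.sum_congr rfl fun i _ => ?_
    rw [Finset.mul_sum, ← Finset.sum_add_distrib, ← Finset.sum_sub_distrib]
    exact Finset.sum_congr rfl fun j _ => by ring
  rw [lhs, rhs, h1]
  ring

lemma dot_lap_nonneg (hsymm : W.IsSymm) (hw : ∀ i j, 0 ≤ W i j) (x : Fin n → ℝ) :
    0 ≤ x ⬝ᵥ (lap W *ᵥ x) := by
  rw [dot_lap_eq hsymm]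
  have : 0 ≤ ∑ i, ∑ j, W i j * (x i - x j)^2 :=
    Finset.sum_nonneg fun i _ => Finset.sum_nonneg fun j _ =>
      mul_nonneg (hw i j) (sq_nonneg _)
  linarith

lemma lap_one : lap W *ᵥ (fun _ => (1:ℝ)) = 0 := by
  funext i; rw [lap_mulVec]; simp [deg]

lemma lap_transpose (hsymm : W.IsSymm) : (lap W)ᵀ = lap W := by
  rw [lap, Matrix.transpose_sub, Matrix.diagonal_transpose, hsymm.eq]

lemma sum_lap (hsymm : W.IsSymm) (x : Fin n → ℝ) : ∑ i, (lap W *ᵥ x) i = 0 := by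
  have : ∑ i, (lap W *ᵥ x) i = (fun _ => (1:ℝ)) ⬝ᵥ (lap W *ᵥ x) := by
    simp [dotProduct]
  rw [this, Matrix.dotProduct_mulVec, ← Matrix.mulVec_transpose, lap_transpose hsymm, lap_one]
  simp


noncomputable def cut (W : Matrix (Fin n) (Fin n) ℝ) (X : Finset (Fin n)) : ℝ :=
  ∑ i ∈ X, ∑ j ∈ Xᶜ, W i j

noncomputable def vol (W : Matrix (Fin n) (Fin n) ℝ) (X : Finset (Fin n)) : ℝ :=
  ∑ i ∈ X, deg W i

def chSet (W : Matrix (Fin n) (Fin n) ℝ) : Set ℝ :=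
  { r : ℝ | ∃ X : Finset (Fin n), X.Nonempty ∧ X ≠ Finset.univ ∧
    r = (∑ i ∈ X, ∑ j ∈ Xᶜ, W i j) /
      min (∑ i ∈ X, deg W i) (∑ j ∈ Xᶜ, deg W j) }

lemma cheeger_eq : cheeger W = sInf (chSet W) := rfl

lemma ratio_mem (X : Finset (Fin n)) (h1 : X.Nonempty) (h2 : X ≠ Finset.univ) :
    cut W X / min (vol W X) (vol W Xᶜ) ∈ chSet W := ⟨X, h1, h2, rfl⟩

lemma cut_nonneg (hw : ∀ i j, 0 ≤ W i j) (X : Finset (Fin n)) : 0 ≤ cut W X :=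
  Finset.sum_nonneg fun i _ => Finset.sum_nonneg fun j _ => hw i j

lemma deg_nonneg (hw : ∀ i j, 0 ≤ W i j) (i : Fin n) : 0 ≤ deg W i :=
  Finset.sum_nonneg fun j _ => hw i j

lemma vol_nonneg (hw : ∀ i j, 0 ≤ W i j) (X : Finset (Fin n)) : 0 ≤ vol W X :=
  Finset.sum_nonneg fun i _ => deg_nonneg hw i

lemma vol_mono (hw : ∀ i j, 0 ≤ W i j) {X Y : Finset (Fin n)} (h : X ⊆ Y) :
    vol W X ≤ vol W Y :=
  Finset.sum_le_sum_of_subset_of_nonneg h fun i _ _ => deg_nonneg hw i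

lemma chSet_nonneg (hw : ∀ i j, 0 ≤ W i j) {r : ℝ} (hr : r ∈ chSet W) : 0 ≤ r := by
  obtain ⟨X, h1, h2, rfl⟩ := hr
  apply div_nonneg (cut_nonneg hw X)
  exact le_min (vol_nonneg hw X) (vol_nonneg hw Xᶜ)

lemma chSet_bddBelow (hw : ∀ i j, 0 ≤ W i j) : BddBelow (chSet W) :=
  ⟨0, fun r hr => chSet_nonneg hw hr⟩

lemma chSet_nonempty (hn : 2 ≤ n) : (chSet W).Nonempty := by
  have h0 : (0 : ℕ) < n := by omega
  refine ⟨_, ⟨{⟨0, h0⟩}, Finset.singleton_nonempty _, ?_, rfl⟩⟩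
  intro h
  have h1 : (⟨1, hn⟩ : Fin n) ∈ ({⟨0, h0⟩} : Finset (Fin n)) := h ▸ Finset.mem_univ _
  simp at h1

lemma cheeger_nonneg (hn : 2 ≤ n) (hw : ∀ i j, 0 ≤ W i j) : 0 ≤ cheeger W :=
  le_csInf (chSet_nonempty hn) fun r hr => chSet_nonneg hw hr

lemma cheeger_le (hw : ∀ i j, 0 ≤ W i j) (X : Finset (Fin n)) (h1 : X.Nonempty)
    (h2 : X ≠ Finset.univ) : cheeger W ≤ cut W X / min (vol W X) (vol W Xᶜ) :=
  csInf_le (chSet_bddBelow hw) (ratio_mem X h1 h2)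

lemma cheeger_mul_vol_le (hw : ∀ i j, 0 ≤ W i j) (hn : 2 ≤ n) (X : Finset (Fin n))
    (h1 : X.Nonempty) (h2 : X ≠ Finset.univ) (hv : vol W X ≤ vol W Xᶜ) :
    cheeger W * vol W X ≤ cut W X := by
  rcases eq_or_lt_of_le (vol_nonneg hw X) with h0 | h0
  · rw [← h0, mul_zero]; exact cut_nonneg hw X
  · have := cheeger_le hw X h1 h2
    rw [min_eq_left hv] at this
    calc cheeger W * vol W X ≤ (cut W X / vol W X) * vol W X :=
          mul_le_mul_of_nonneg_right this (le_of_lt h0)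
      _ = cut W X := div_mul_cancel₀ _ (ne_of_gt h0)

lemma cut_symm_eq (hsymm : W.IsSymm) (X : Finset (Fin n)) :
    ∑ i ∈ Xᶜ, ∑ j ∈ X, W i j = cut W X := by
  unfold cut
  refine Finset.sum_comm.trans ?_
  exact Finset.sum_congr rfl fun i _ => Finset.sum_congr rfl fun j _ =>
    (congrFun (congrFun hsymm.eq j) i).symm

/-- existence of a minimizing cut -/
lemma cheeger_attained (hn : 2 ≤ n) : cheeger W ∈ chSet W := by
  have hfin : (chSet W).Finite := by
    apply Set.Finite.subset (Set.finite_range (fun X : Finset (Fin n) =>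
      cut W X / min (vol W X) (vol W Xᶜ)))
    rintro r ⟨X, _, _, rfl⟩
    exact ⟨X, rfl⟩
  exact (chSet_nonempty hn).csInf_mem hfin


lemma coe_withlp (x : Fin n → ℝ) : ⇑((WithLp.equiv 2 (Fin n → ℝ)).symm x) = x := rfl

lemma sumv_dot (x : Fin n → ℝ) (y : Fin n → Fin n → ℝ) :
    (∑ k, y k) ⬝ᵥ x = ∑ k, y k ⬝ᵥ x := by
  simp [dotProduct, Finset.sum_apply, Finset.sum_mul]
  exact Finset.sum_comm

lemma dot_self_nonneg' (x : Fin n → ℝ) : 0 ≤ x ⬝ᵥ x :=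
  Finset.sum_nonneg fun i _ => mul_self_nonneg _

section CF
variable {W : Matrix (Fin n) (Fin n) ℝ}

lemma eig_nonneg (hsymm : W.IsSymm) (hw : ∀ i j, 0 ≤ W i j) (hL : (lap W).IsHermitian)
    (k : Fin n) : 0 ≤ hL.eigenvalues k := by
  have h1 : ⇑(hL.eigenvectorBasis k) ⬝ᵥ (lap W *ᵥ ⇑(hL.eigenvectorBasis k))
      = hL.eigenvalues k := by
    rw [hL.mulVec_eigenvectorBasis, dotProduct_smul, smul_eq_mul, dot_eigen hL k k]
    simp
  rw [← h1]
  exact dot_lap_nonneg hsymm hw _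

lemma eig_dot_one (hsymm : W.IsSymm) (hL : (lap W).IsHermitian) (k : Fin n) :
    hL.eigenvalues k * (⇑(hL.eigenvectorBasis k) ⬝ᵥ (fun _ => (1:ℝ))) = 0 := by
  have h1 : ⇑(hL.eigenvectorBasis k) ⬝ᵥ (lap W *ᵥ (fun _ => (1:ℝ))) = 0 := by
    rw [lap_one (W:=W)]; simp
  rw [Matrix.dotProduct_mulVec, ← Matrix.mulVec_transpose, lap_transpose hsymm,
    hL.mulVec_eigenvectorBasis, smul_dotProduct, smul_eq_mul] at h1
  exact h1

lemma CF_upper (hsymm : W.IsSymm) (hw : ∀ i j, 0 ≤ W i j) (hL : (lap W).IsHermitian)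
    (hn : 2 ≤ n) {μ : Fin n → ℝ} (hmono : Monotone μ)
    (σ : Equiv.Perm (Fin n)) (hperm : hL.eigenvalues = μ ∘ σ)
    (x : Fin n → ℝ) (hsum : ∑ i, x i = 0) :
    μ ⟨1, hn⟩ * (x ⬝ᵥ x) ≤ x ⬝ᵥ (lap W *ᵥ x) := by
  rcases le_or_gt (μ ⟨1, hn⟩) 0 with hneg | hpos
  · calc μ ⟨1, hn⟩ * (x ⬝ᵥ x) ≤ 0 :=
        mul_nonpos_of_nonpos_of_nonneg hneg (dot_self_nonneg' x)
      _ ≤ x ⬝ᵥ (lap W *ᵥ x) := dot_lap_nonneg hsymm hw x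
  · have hge : ∀ k, k ≠ σ.symm ⟨0, by omega⟩ → μ ⟨1, hn⟩ ≤ hL.eigenvalues k := by
      intro k hk
      have h1 : σ k ≠ ⟨0, by omega⟩ := fun h => hk (by rw [← h, Equiv.symm_apply_apply])
      have h2 : (⟨1, hn⟩ : Fin n) ≤ σ k := by
        have hne : (σ k).val ≠ 0 := fun h => h1 (Fin.ext h)
        exact Fin.mk_le_of_le_val (by omega)
      have h3 := hmono h2
      rw [hperm]; exact h3
    have hck : ∀ k, k ≠ σ.symm ⟨0, by omega⟩ →
        ⇑(hL.eigenvectorBasis k) ⬝ᵥ (fun _ => (1:ℝ)) = 0 := by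
      intro k hk
      have h1 := eig_dot_one hsymm hL k
      rcases mul_eq_zero.mp h1 with h | h
      · exfalso; have h2 := hge k hk; rw [h] at h2; linarith
      · exact h
    have hrepr := repr_dot hL ((WithLp.equiv 2 (Fin n → ℝ)).symm (fun _ => (1:ℝ)))
    rw [coe_withlp] at hrepr
    have hc0 : ⇑(hL.eigenvectorBasis (σ.symm ⟨0, by omega⟩)) ⬝ᵥ (fun _ => (1:ℝ)) ≠ 0 := by
      intro h
      have hzero : (fun _ => (1:ℝ)) = (0 : Fin n → ℝ) := by
        rw [hrepr]
        apply Finset.sum_eq_zero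
        intro k _
        rcases eq_or_ne k (σ.symm ⟨0, by omega⟩) with rfl | hk
        · rw [h, zero_smul]
        · rw [hck k hk, zero_smul]
      have h0 := congrFun hzero ⟨0, by omega⟩
      norm_num at h0
    have hxc0 : ⇑(hL.eigenvectorBasis (σ.symm ⟨0, by omega⟩)) ⬝ᵥ x = 0 := by
      have h1 : (fun _ => (1:ℝ)) ⬝ᵥ x = 0 := by
        simpa [dotProduct] using hsum
      rw [hrepr, sumv_dot] at h1
      have h2 : ∀ k ∈ univ, k ≠ σ.symm ⟨0, by omega⟩ →
          ((⇑(hL.eigenvectorBasis k) ⬝ᵥ (fun _ => (1:ℝ))) • ⇑(hL.eigenvectorBasis k)) ⬝ᵥ x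
            = 0 := by
        intro k _ hk
        rw [hck k hk, zero_smul, zero_dotProduct]
      rw [Finset.sum_eq_single_of_mem _ (mem_univ _) h2, smul_dotProduct, smul_eq_mul] at h1
      rcases mul_eq_zero.mp h1 with h | h
      · exact absurd h hc0
      · exact h
    have hx := spec_expand hL ((WithLp.equiv 2 (Fin n → ℝ)).symm x)
    have hx2 := dot_self_expand hL ((WithLp.equiv 2 (Fin n → ℝ)).symm x)
    rw [coe_withlp] at hx hx2
    rw [hx, hx2, Finset.mul_sum]
    apply Finset.sum_le_sum
    intro k _
    rcases eq_or_ne k (σ.symm ⟨0, by omega⟩) with rfl | hk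
    · rw [hxc0]
      simp
    · exact mul_le_mul_of_nonneg_right (hge k hk) (sq_nonneg _)

lemma mu1_exists_eigvec (hL : (lap W).IsHermitian) (hn : 2 ≤ n) {μ : Fin n → ℝ}
    (σ : Equiv.Perm (Fin n)) (hperm : hL.eigenvalues = μ ∘ σ) :
    ∃ f : Fin n → ℝ, f ⬝ᵥ f = 1 ∧ lap W *ᵥ f = μ ⟨1, hn⟩ • f := by
  refine ⟨⇑(hL.eigenvectorBasis (σ.symm ⟨1, hn⟩)), ?_, ?_⟩
  · rw [dot_eigen hL]; simp
  · rw [hL.mulVec_eigenvectorBasis, hperm]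
    simp

lemma mu1_nonneg (hsymm : W.IsSymm) (hw : ∀ i j, 0 ≤ W i j) (hL : (lap W).IsHermitian)
    (hn : 2 ≤ n) {μ : Fin n → ℝ} (σ : Equiv.Perm (Fin n)) (hperm : hL.eigenvalues = μ ∘ σ) : 0 ≤ μ ⟨1, hn⟩ := by
  have h := eig_nonneg hsymm hw hL (σ.symm ⟨1, hn⟩)
  rw [hperm] at h
  simpa using h


end CF
section Rest
variable {W : Matrix (Fin n) (Fin n) ℝ}

lemma dot_self_pos {x : Fin n → ℝ} (hx : x ≠ 0) : 0 < x ⬝ᵥ x := by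
  obtain ⟨i, hi⟩ := Function.ne_iff.mp hx
  apply Finset.sum_pos' (fun j _ => mul_self_nonneg _) ⟨i, mem_univ i, ?_⟩
  exact mul_self_pos.mpr hi

lemma dmax_nonneg (hn : 2 ≤ n) (hw : ∀ i j, 0 ≤ W i j) : 0 ≤ ⨆ i, deg W i := by
  have h0 : (0:ℕ) < n := by omega
  exact le_trans (deg_nonneg hw ⟨0, h0⟩)
    (le_ciSup (Set.finite_range (deg W)).bddAbove ⟨0, h0⟩)

lemma deg_le_dmax (hn : 2 ≤ n) (i : Fin n) : deg W i ≤ ⨆ i, deg W i :=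
  le_ciSup (Set.finite_range (deg W)).bddAbove i

/-- If `Y` has zero volume (all its vertices isolated), its indicator is in the kernel. -/
lemma lap_indicator_zero (hsymm : W.IsSymm) (hw : ∀ i j, 0 ≤ W i j)
    {Y : Finset (Fin n)} (hY : vol W Y = 0) :
    lap W *ᵥ (fun i => if i ∈ Y then (1:ℝ) else 0) = 0 := by
  have hdeg : ∀ i ∈ Y, deg W i = 0 := by
    intro i hi
    have h1 := Finset.sum_eq_zero_iff_of_nonneg (fun j _ => deg_nonneg hw j) |>.mp hY
    exact h1 i hi
  have hWzero : ∀ i ∈ Y, ∀ j, W i j = 0 := by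
    intro i hi j
    have h1 := Finset.sum_eq_zero_iff_of_nonneg (fun j _ => hw i j) |>.mp (hdeg i hi)
    exact h1 j (mem_univ j)
  have hWzero' : ∀ j ∈ Y, ∀ i, W i j = 0 := by
    intro j hj i
    have := hWzero j hj i
    rw [← congrFun (congrFun hsymm.eq j) i] at this
    exact this
  funext i
  rw [lap_mulVec]
  rcases Finset.decidableMem i Y with hi | hi
  · -- i ∉ Y
    simp only [if_neg hi, mul_zero, Pi.zero_apply, zero_sub, neg_eq_zero]
    apply Finset.sum_eq_zero
    intro j _
    rcases Finset.decidableMem j Y with hj | hj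
    · rw [if_neg hj, mul_zero]
    · rw [hWzero' j hj i, zero_mul]
  · simp only [if_pos hi, mul_one, Pi.zero_apply]
    rw [hdeg i hi]
    rw [Finset.sum_eq_zero fun j _ => by rw [hWzero i hi j, zero_mul]]
    ring

lemma mu1_eq_zero_of_zero_vol (hsymm : W.IsSymm) (hw : ∀ i j, 0 ≤ W i j)
    (hL : (lap W).IsHermitian) (hn : 2 ≤ n) {μ : Fin n → ℝ} (hmono : Monotone μ)
    (σ : Equiv.Perm (Fin n)) (hperm : hL.eigenvalues = μ ∘ σ)
    {Y : Finset (Fin n)} (hY1 : Y.Nonempty) (hY2 : Y ≠ Finset.univ) (hY : vol W Y = 0) :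
    μ ⟨1, hn⟩ ≤ 0 := by
  set c : ℝ := (Y.card : ℝ) / n with hc
  set x : Fin n → ℝ := fun i => (if i ∈ Y then (1:ℝ) else 0) - c with hx
  have hsum : ∑ i, x i = 0 := by
    simp only [hx, Finset.sum_sub_distrib, Finset.sum_const, Finset.sum_ite_mem,
      Finset.univ_inter, hc]
    have hn0 : (n:ℝ) ≠ 0 := by positivity
    simp only [nsmul_eq_mul, smul_eq_mul, mul_one, Finset.card_univ, Fintype.card_fin]
    field_simp
    ring
  have hker : lap W *ᵥ x = 0 := by
    have h1 : x = (fun i => if i ∈ Y then (1:ℝ) else 0) + (-c) • (fun _ => (1:ℝ)) := by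
      funext i; simp [hx]; ring
    rw [h1, Matrix.mulVec_add, Matrix.mulVec_smul, lap_indicator_zero hsymm hw hY, lap_one]
    simp
  have hCF := CF_upper hsymm hw hL hn hmono σ hperm x hsum
  rw [hker] at hCF
  simp only [dotProduct_zero] at hCF
  have hxne : x ≠ 0 := by
    obtain ⟨i0, hi0⟩ := hY1
    have hj0 : ∃ j, j ∉ Y := by
      by_contra h
      push_neg at h
      exact hY2 (Finset.eq_univ_iff_forall.mpr h)
    obtain ⟨j0, hj0⟩ := hj0
    intro h0
    have e1 := congrFun h0 i0
    have e2 := congrFun h0 j0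
    simp only [hx, if_pos hi0, if_neg hj0, Pi.zero_apply] at e1 e2
    linarith
  nlinarith [dot_self_pos hxne]


lemma compl_nonempty_of_ne_univ {X : Finset (Fin n)} (h : X ≠ Finset.univ) : Xᶜ.Nonempty := by
  rw [← Finset.card_pos, Finset.card_compl]
  have : X.card < Fintype.card (Fin n) := lt_of_le_of_ne (Finset.card_le_univ X)
    (fun hc => h (Finset.card_eq_iff_eq_univ X |>.mp (by simpa using hc)))
  omega

lemma compl_ne_univ_of_nonempty {X : Finset (Fin n)} (h : X.Nonempty) : Xᶜ ≠ Finset.univ := by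
  obtain ⟨i, hi⟩ := h
  intro hc
  have : i ∈ Xᶜ := hc ▸ Finset.mem_univ i
  exact (Finset.mem_compl.mp this) hi

lemma upper_bound {W : Matrix (Fin n) (Fin n) ℝ} (hsymm : W.IsSymm) (hw : ∀ i j, 0 ≤ W i j)
    (hL : (lap W).IsHermitian) (hn : 2 ≤ n) {μ : Fin n → ℝ} (hmono : Monotone μ)
    (σ : Equiv.Perm (Fin n)) (hperm : hL.eigenvalues = μ ∘ σ) :
    μ ⟨1, hn⟩ ≤ 2 * (⨆ i, deg W i) * cheeger W := by
  obtain ⟨X, hX1, hX2, hXr⟩ := cheeger_attained (W := W) hn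
  have hXr' : cheeger W = cut W X / min (vol W X) (vol W Xᶜ) := hXr
  have hm0 : (0:ℝ) ≤ min (vol W X) (vol W Xᶜ) := le_min (vol_nonneg hw X) (vol_nonneg hw Xᶜ)
  have htriv : 0 ≤ 2 * (⨆ i, deg W i) * cheeger W := by
    have h1 := dmax_nonneg hn hw
    have h2 := cheeger_nonneg hn hw
    positivity
  rcases eq_or_lt_of_le hm0 with hm | hm
  · -- zero volume case
    have hzero : vol W X = 0 ∨ vol W Xᶜ = 0 := by
      rcases min_cases (vol W X) (vol W Xᶜ) with ⟨he, _⟩ | ⟨he, _⟩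
      · left; rw [← he, ← hm]
      · right; rw [← he, ← hm]
    have hmu : μ ⟨1, hn⟩ ≤ 0 := by
      rcases hzero with hz | hz
      · exact mu1_eq_zero_of_zero_vol hsymm hw hL hn hmono σ hperm hX1 hX2 hz
      · exact mu1_eq_zero_of_zero_vol hsymm hw hL hn hmono σ hperm
          (compl_nonempty_of_ne_univ hX2) (compl_ne_univ_of_nonempty hX1) hz
    linarith
  · -- positive volume case
    have hvX : 0 < vol W X := lt_of_lt_of_le hm (min_le_left _ _)
    have hvXc : 0 < vol W Xᶜ := lt_of_lt_of_le hm (min_le_right _ _)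
    have hcX : 0 < ((X.card : ℕ) : ℝ) := by
      exact_mod_cast Finset.card_pos.mpr hX1
    have hcXc : 0 < ((Xᶜ.card : ℕ) : ℝ) := by
      exact_mod_cast Finset.card_pos.mpr (compl_nonempty_of_ne_univ hX2)
    set a : ℝ := 1 / (X.card : ℝ) with ha
    set b : ℝ := 1 / (Xᶜ.card : ℝ) with hb
    have hapos : 0 < a := by positivity
    have hbpos : 0 < b := by positivity
    set x : Fin n → ℝ := fun i => if i ∈ X then a else -b with hx
    have hsum : ∑ i, x i = 0 := by
      rw [← Finset.sum_add_sum_compl X]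
      have t1 : ∀ i ∈ X, x i = a := fun i hi => by simp [hx, if_pos hi]
      have t2 : ∀ i ∈ Xᶜ, x i = -b := fun i hi => by
        simp only [hx]; rw [if_neg (Finset.mem_compl.mp hi)]
      have e1 : ∑ i ∈ X, x i = (X.card : ℝ) * a := by
        rw [Finset.sum_congr rfl t1, Finset.sum_const, nsmul_eq_mul]
      have e2 : ∑ i ∈ Xᶜ, x i = (Xᶜ.card : ℝ) * (-b) := by
        rw [Finset.sum_congr rfl t2, Finset.sum_const, nsmul_eq_mul]
      rw [e1, e2, ha, hb]
      field_simp
      ring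
    have hdot : x ⬝ᵥ x = a + b := by
      rw [dotProduct, ← Finset.sum_add_sum_compl X]
      have t1 : ∀ i ∈ X, x i * x i = a * a := fun i hi => by simp [hx, if_pos hi]
      have t2 : ∀ i ∈ Xᶜ, x i * x i = b * b := fun i hi => by
        simp only [hx]; rw [if_neg (Finset.mem_compl.mp hi)]; ring
      have e1 : ∑ i ∈ X, x i * x i = (X.card : ℝ) * (a * a) := by
        rw [Finset.sum_congr rfl t1, Finset.sum_const, nsmul_eq_mul]
      have e2 : ∑ i ∈ Xᶜ, x i * x i = (Xᶜ.card : ℝ) * (b * b) := by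
        rw [Finset.sum_congr rfl t2, Finset.sum_const, nsmul_eq_mul]
      rw [e1, e2, ha, hb]
      field_simp
    have hq : x ⬝ᵥ (lap W *ᵥ x) = (a+b)^2 * cut W X := by
      rw [dot_lap_eq hsymm]
      have inner_split : ∀ i, ∑ j, W i j * (x i - x j)^2
          = ∑ j ∈ X, W i j * (x i - x j)^2 + ∑ j ∈ Xᶜ, W i j * (x i - x j)^2 :=
        fun i => (Finset.sum_add_sum_compl X _).symm
      have outer : ∑ i, ∑ j, W i j * (x i - x j)^2
          = ∑ i ∈ X, ∑ j, W i j * (x i - x j)^2 + ∑ i ∈ Xᶜ, ∑ j, W i j * (x i - x j)^2 :=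
        (Finset.sum_add_sum_compl X _).symm
      have eXX : ∀ i ∈ X, ∀ j ∈ X, W i j * (x i - x j)^2 = 0 := by
        intro i hi j hj; simp [hx, if_pos hi, if_pos hj]
      have eXXc : ∀ i ∈ X, ∀ j ∈ Xᶜ, W i j * (x i - x j)^2 = W i j * (a+b)^2 := by
        intro i hi j hj
        rw [hx]
        simp only [if_pos hi, if_neg (Finset.mem_compl.mp hj)]
        ring_nf
      have eXcX : ∀ i ∈ Xᶜ, ∀ j ∈ X, W i j * (x i - x j)^2 = W i j * (a+b)^2 := by
        intro i hi j hj
        rw [hx]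
        simp only [if_neg (Finset.mem_compl.mp hi), if_pos hj]
        ring_nf
      have eXcXc : ∀ i ∈ Xᶜ, ∀ j ∈ Xᶜ, W i j * (x i - x j)^2 = 0 := by
        intro i hi j hj
        simp [hx, if_neg (Finset.mem_compl.mp hi), if_neg (Finset.mem_compl.mp hj)]
      rw [outer]
      have p1 : ∑ i ∈ X, ∑ j, W i j * (x i - x j)^2 = (a+b)^2 * cut W X := by
        have t1 : ∀ i ∈ X, ∑ j, W i j * (x i - x j)^2 = ∑ j ∈ Xᶜ, W i j * (a+b)^2 :=
          fun i hi => by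
            rw [inner_split i, Finset.sum_eq_zero (eXX i hi), zero_add,
              Finset.sum_congr rfl (eXXc i hi)]
        rw [Finset.sum_congr rfl t1]
        rw [cut, Finset.mul_sum]
        refine Finset.sum_congr rfl fun i _ => ?_
        rw [Finset.mul_sum]
        exact Finset.sum_congr rfl fun j _ => by ring
      have p2 : ∑ i ∈ Xᶜ, ∑ j, W i j * (x i - x j)^2 = (a+b)^2 * cut W X := by
        have t2 : ∀ i ∈ Xᶜ, ∑ j, W i j * (x i - x j)^2 = ∑ j ∈ X, W i j * (a+b)^2 :=
          fun i hi => by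
            rw [inner_split i, Finset.sum_eq_zero (eXcXc i hi), add_zero,
              Finset.sum_congr rfl (eXcX i hi)]
        rw [Finset.sum_congr rfl t2]
        rw [← cut_symm_eq hsymm X, Finset.mul_sum]
        refine Finset.sum_congr rfl fun i _ => ?_
        rw [Finset.mul_sum]
        exact Finset.sum_congr rfl fun j _ => by ring
      rw [p1, p2]
      ring
    have hCF := CF_upper hsymm hw hL hn hmono σ hperm x hsum
    rw [hdot, hq] at hCF
    have step1 : μ ⟨1, hn⟩ ≤ (a+b) * cut W X := by
      have habpos : 0 < a + b := by linarith
      nlinarith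
    set mc : ℝ := min ((X.card : ℕ) : ℝ) ((Xᶜ.card : ℕ) : ℝ) with hmc
    have hmcpos : 0 < mc := lt_min hcX hcXc
    have hab : a + b ≤ 2 / mc := by
      have h1 : a ≤ 1 / mc := by
        rw [ha]
        apply one_div_le_one_div_of_le hmcpos (min_le_left _ _)
      have h2 : b ≤ 1 / mc := by
        rw [hb]
        apply one_div_le_one_div_of_le hmcpos (min_le_right _ _)
      have : (2:ℝ)/mc = 1/mc + 1/mc := by ring
      linarith
    have step2 : μ ⟨1, hn⟩ ≤ 2 / mc * cut W X :=
      le_trans step1 (mul_le_mul_of_nonneg_right hab (cut_nonneg hw X))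
    have hdmax0 := dmax_nonneg hn hw
    have hvol_le : min (vol W X) (vol W Xᶜ) ≤ (⨆ i, deg W i) * mc := by
      have h1 : vol W X ≤ (⨆ i, deg W i) * (X.card : ℝ) := by
        rw [vol]
        calc ∑ i ∈ X, deg W i ≤ ∑ _i ∈ X, (⨆ i, deg W i) :=
            Finset.sum_le_sum fun i _ => deg_le_dmax hn i
          _ = (X.card : ℝ) * (⨆ i, deg W i) := by rw [Finset.sum_const, nsmul_eq_mul]
          _ = (⨆ i, deg W i) * (X.card : ℝ) := by ring
      have h2 : vol W Xᶜ ≤ (⨆ i, deg W i) * (Xᶜ.card : ℝ) := by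
        rw [vol]
        calc ∑ i ∈ Xᶜ, deg W i ≤ ∑ _i ∈ Xᶜ, (⨆ i, deg W i) :=
            Finset.sum_le_sum fun i _ => deg_le_dmax hn i
          _ = (Xᶜ.card : ℝ) * (⨆ i, deg W i) := by rw [Finset.sum_const, nsmul_eq_mul]
          _ = (⨆ i, deg W i) * (Xᶜ.card : ℝ) := by ring
      rcases min_cases ((X.card : ℕ) : ℝ) ((Xᶜ.card : ℕ) : ℝ) with ⟨he, hle⟩ | ⟨he, hle⟩
      · rw [hmc, he]
        exact le_trans (min_le_left _ _) h1
      · rw [hmc, he]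
        exact le_trans (min_le_right _ _) h2
    have step3 : 2 / mc * cut W X ≤ 2 * (⨆ i, deg W i) * (cut W X / min (vol W X) (vol W Xᶜ)) := by
      have hcut := cut_nonneg hw X
      rw [show (2:ℝ) / mc * cut W X = 2 * cut W X / mc from by ring,
        show 2 * (⨆ i, deg W i) * (cut W X / (vol W X ⊓ vol W Xᶜ))
          = 2 * (⨆ i, deg W i) * cut W X / (vol W X ⊓ vol W Xᶜ) from by ring,
        div_le_div_iff₀ hmcpos hm]
      nlinarith
    rw [hXr']
    exact le_trans step2 step3


lemma sweep (hsymm : W.IsSymm) (hw : ∀ i j, 0 ≤ W i j) (hn : 2 ≤ n)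
    (g : Fin n → ℝ) (hg : ∀ i, 0 ≤ g i) (hg0 : ∃ i, g i = 0)
    (hsub : ∀ T : Finset (Fin n), T.Nonempty → T ≠ Finset.univ →
      (∀ i ∈ T, 0 < g i) → cheeger W * vol W T ≤ cut W T) :
    2 * cheeger W * ∑ i, deg W i * g i ^ 2 ≤ ∑ i, ∑ j, W i j * |g i ^ 2 - g j ^ 2| := by
  classical
  set π := Tuple.sort g with hπ
  have hmono : Monotone (g ∘ π) := Tuple.monotone_sort g
  set rk : Fin n → ℕ := fun i => (π.symm i : ℕ) with hrk
  have hrk_lt : ∀ i, rk i < n := fun i => (π.symm i).isLt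
  set s : ℕ → ℝ := fun k => if h : k < n then (g (π ⟨k, h⟩))^2 else 0 with hs
  set Δ : ℕ → ℝ := fun k => s (k+1) - s k with hΔdef
  set T : ℕ → Finset (Fin n) := fun k => univ.filter (fun i => k < rk i) with hT
  have hmem_T : ∀ k i, i ∈ T k ↔ k < rk i := by
    intro k i; simp [hT]
  have hs_mono : ∀ k l, k ≤ l → l < n → s k ≤ s l := by
    intro k l hkl hl
    have hk : k < n := lt_of_le_of_lt (le_of_eq rfl) (by omega)
    have h1 : g (π ⟨k, hk⟩) ≤ g (π ⟨l, hl⟩) := hmono (by exact Fin.mk_le_mk.mpr hkl)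
    have h2 : 0 ≤ g (π ⟨k, hk⟩) := hg _
    simp only [hs, dif_pos hk, dif_pos hl]
    nlinarith
  have hs0 : s 0 = 0 := by
    obtain ⟨i0, hi0⟩ := hg0
    have h0n : 0 < n := by omega
    have h1 : g (π ⟨0, h0n⟩) ≤ g i0 := by
      have : (⟨0, h0n⟩ : Fin n) ≤ π.symm i0 := Fin.mk_le_mk.mpr (Nat.zero_le _)
      have h2 := hmono this
      simpa using h2
    have h2 : 0 ≤ g (π ⟨0, h0n⟩) := hg _
    simp only [hs, dif_pos h0n]
    nlinarith [hi0]
  have hgi : ∀ i, g i ^ 2 = s (rk i) := by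
    intro i
    simp only [hs, dif_pos (hrk_lt i)]
    have hpi : π ⟨rk i, hrk_lt i⟩ = i := by
      have he : (⟨rk i, hrk_lt i⟩ : Fin n) = π.symm i := by
        apply Fin.ext; simp [hrk]
      rw [he, Equiv.apply_symm_apply]
    rw [hpi]
  have hΔnonneg : ∀ k, k + 1 < n → 0 ≤ Δ k := by
    intro k hk
    simp only [hΔdef]
    have := hs_mono k (k+1) (by omega) hk
    linarith
  have htel : ∀ a, a < n → ∑ k ∈ range (n-1), (if k < a then Δ k else 0) = s a := by
    intro a ha
    rw [← Finset.sum_filter]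
    have hfe : (range (n-1)).filter (· < a) = range a := by
      ext k
      simp only [Finset.mem_filter, Finset.mem_range]
      omega
    rw [hfe, Finset.sum_range_sub (f := s), hs0, sub_zero]
  -- Identity A
  have hA : ∑ i, deg W i * g i ^ 2 = ∑ k ∈ range (n-1), Δ k * vol W (T k) := by
    have h1 : ∀ i : Fin n, deg W i * g i ^ 2
        = ∑ k ∈ range (n-1), (if k < rk i then deg W i * Δ k else 0) := by
      intro i
      rw [show ∑ k ∈ range (n-1), (if k < rk i then deg W i * Δ k else 0)
          = deg W i * ∑ k ∈ range (n-1), (if k < rk i then Δ k else 0) from by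
        rw [Finset.mul_sum]; exact Finset.sum_congr rfl fun k _ => by split <;> simp]
      rw [htel (rk i) (hrk_lt i), hgi i]
    rw [Finset.sum_congr rfl fun i _ => h1 i, Finset.sum_comm]
    refine Finset.sum_congr rfl fun k _ => ?_
    rw [vol, Finset.mul_sum, ← Finset.sum_filter]
    rw [show (univ.filter fun i => k < rk i) = T k from rfl]
    exact Finset.sum_congr rfl fun i _ => mul_comm _ _
  -- absolute-value layer identity
  have habs0 : ∀ i j : Fin n, rk i ≤ rk j → |g i ^ 2 - g j ^ 2|
      = ∑ k ∈ range (n-1), Δ k * |(if k < rk i then (1:ℝ) else 0) - (if k < rk j then 1 else 0)| := by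
    intro i j hij
    have h1 : |g i ^ 2 - g j ^ 2| = s (rk j) - s (rk i) := by
      rw [hgi i, hgi j, abs_sub_comm, abs_of_nonneg (by linarith [hs_mono _ _ hij (hrk_lt j)])]
    rw [h1, ← htel (rk i) (hrk_lt i), ← htel (rk j) (hrk_lt j), ← Finset.sum_sub_distrib]
    refine Finset.sum_congr rfl fun k hk => ?_
    rcases lt_or_ge k (rk i) with h | h
    · rw [if_pos h, if_pos (lt_of_lt_of_le h hij), if_pos h, if_pos (lt_of_lt_of_le h hij)]
      simp
    · rcases lt_or_ge k (rk j) with h2 | h2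
      · rw [if_neg (not_lt.mpr h), if_pos h2, if_neg (not_lt.mpr h), if_pos h2]
        simp
      · rw [if_neg (not_lt.mpr h), if_neg (not_lt.mpr h2), if_neg (not_lt.mpr h),
          if_neg (not_lt.mpr h2)]
        simp
  have habs : ∀ i j : Fin n, |g i ^ 2 - g j ^ 2|
      = ∑ k ∈ range (n-1), Δ k * |(if k < rk i then (1:ℝ) else 0) - (if k < rk j then 1 else 0)| := by
    intro i j
    rcases le_total (rk i) (rk j) with h | h
    · exact habs0 i j h
    · rw [abs_sub_comm, habs0 j i h]
      exact Finset.sum_congr rfl fun k _ => by rw [abs_sub_comm]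
  -- Identity B with per-k cut evaluation
  have hB : ∑ i, ∑ j, W i j * |g i ^ 2 - g j ^ 2|
      = ∑ k ∈ range (n-1), Δ k * (2 * cut W (T k)) := by
    have h1 : ∑ i, ∑ j, W i j * |g i ^ 2 - g j ^ 2|
        = ∑ i, ∑ j, ∑ k ∈ range (n-1),
          W i j * (Δ k * |(if k < rk i then (1:ℝ) else 0) - (if k < rk j then 1 else 0)|) := by
      refine Finset.sum_congr rfl fun i _ => Finset.sum_congr rfl fun j _ => ?_
      rw [habs i j, Finset.mul_sum]
    rw [h1]
    have h2 : ∀ i : Fin n, ∑ j, ∑ k ∈ range (n-1),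
          W i j * (Δ k * |(if k < rk i then (1:ℝ) else 0) - (if k < rk j then 1 else 0)|)
        = ∑ k ∈ range (n-1), ∑ j,
          W i j * (Δ k * |(if k < rk i then (1:ℝ) else 0) - (if k < rk j then 1 else 0)|) :=
      fun i => Finset.sum_comm
    rw [Finset.sum_congr rfl fun i _ => h2 i, Finset.sum_comm]
    refine Finset.sum_congr rfl fun k hk => ?_
    -- now evaluate ∑ i ∑ j W i j * (Δ k * str) = Δ k * 2 * cut (T k)
    have hstr : ∀ i j : Fin n,
        W i j * (Δ k * |(if k < rk i then (1:ℝ) else 0) - (if k < rk j then 1 else 0)|)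
        = Δ k * (W i j * (if (i ∈ T k) ≠ (j ∈ T k) then 1 else 0)) := by
      intro i j
      rcases lt_or_ge k (rk i) with h1 | h1 <;> rcases lt_or_ge k (rk j) with h2 | h2
      · rw [if_pos h1, if_pos h2, if_neg (by simp [hmem_T, h1, h2])]
        simp [mul_comm]
      · rw [if_pos h1, if_neg (not_lt.mpr h2), if_pos (by simp [hmem_T, h1, not_lt.mpr h2])]
        simp; ring
      · rw [if_neg (not_lt.mpr h1), if_pos h2, if_pos (by simp [hmem_T, h2, not_lt.mpr h1])]
        simp; ring
      · rw [if_neg (not_lt.mpr h1), if_neg (not_lt.mpr h2),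
          if_neg (by simp [hmem_T, not_lt.mpr h1, not_lt.mpr h2])]
        simp
    rw [Finset.sum_congr rfl fun i _ => Finset.sum_congr rfl fun j _ => hstr i j]
    have h3 : ∑ i, ∑ j, Δ k * (W i j * (if (i ∈ T k) ≠ (j ∈ T k) then (1:ℝ) else 0))
        = Δ k * ∑ i, ∑ j, W i j * (if (i ∈ T k) ≠ (j ∈ T k) then (1:ℝ) else 0) := by
      rw [Finset.mul_sum]
      exact Finset.sum_congr rfl fun i _ => by rw [Finset.mul_sum]
    rw [h3]
    congr 1
    -- ∑ i ∑ j W i j * ind(exactly one in T k) = 2 * cut (T k)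
    set Y := T k with hY
    have e1 : ∑ i, ∑ j, W i j * (if (i ∈ Y) ≠ (j ∈ Y) then (1:ℝ) else 0)
        = ∑ i ∈ Y, ∑ j ∈ Yᶜ, W i j + ∑ i ∈ Yᶜ, ∑ j ∈ Y, W i j := by
      rw [← Finset.sum_add_sum_compl Y]
      congr 1
      · refine Finset.sum_congr rfl fun i hi => ?_
        rw [← Finset.sum_add_sum_compl Y (fun j => W i j * _)]
        rw [show ∑ j ∈ Y, W i j * (if (i ∈ Y) ≠ (j ∈ Y) then (1:ℝ) else 0) = 0 from
          Finset.sum_eq_zero fun j hj => by simp [hi, hj]]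
        rw [show ∑ j ∈ Yᶜ, W i j * (if (i ∈ Y) ≠ (j ∈ Y) then (1:ℝ) else 0)
            = ∑ j ∈ Yᶜ, W i j from Finset.sum_congr rfl fun j hj => by
          simp [hi, Finset.mem_compl.mp hj]]
        rw [zero_add]
      · refine Finset.sum_congr rfl fun i hi => ?_
        have hi' : i ∉ Y := Finset.mem_compl.mp hi
        rw [← Finset.sum_add_sum_compl Y (fun j => W i j * _)]
        rw [show ∑ j ∈ Y, W i j * (if (i ∈ Y) ≠ (j ∈ Y) then (1:ℝ) else 0)
            = ∑ j ∈ Y, W i j from Finset.sum_congr rfl fun j hj => by simp [hi', hj]]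
        rw [show ∑ j ∈ Yᶜ, W i j * (if (i ∈ Y) ≠ (j ∈ Y) then (1:ℝ) else 0) = 0 from
          Finset.sum_eq_zero fun j hj => by simp [hi', Finset.mem_compl.mp hj]]
        rw [add_zero]
    rw [e1, cut_symm_eq hsymm, cut]
    ring
  -- per-k inequality and conclusion
  rw [hA, hB, Finset.mul_sum]
  apply Finset.sum_le_sum
  intro k hk
  have hkn : k < n - 1 := Finset.mem_range.mp hk
  rcases eq_or_lt_of_le (hΔnonneg k (by omega)) with hΔ0 | hΔpos
  · rw [← hΔ0]; simp
  · have hTne : (T k).Nonempty := by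
      refine ⟨π ⟨n-1, by omega⟩, ?_⟩
      rw [hmem_T]
      have : rk (π ⟨n-1, by omega⟩) = n - 1 := by
        simp only [hrk, Equiv.symm_apply_apply]
      omega
    have hTnu : T k ≠ Finset.univ := by
      intro huniv
      have h0 : π ⟨0, by omega⟩ ∈ T k := huniv ▸ Finset.mem_univ _
      rw [hmem_T] at h0
      simp only [hrk, Equiv.symm_apply_apply] at h0
      omega
    have hTpos : ∀ i ∈ T k, 0 < g i := by
      intro i hi
      rw [hmem_T] at hi
      have h1 : s (k+1) ≤ s (rk i) := hs_mono (k+1) (rk i) (by omega) (hrk_lt i)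
      have h2 : 0 < s (rk i) := by
        have := hΔpos
        simp only [hΔdef] at this
        have h3 : 0 ≤ s k := by
          rw [← hs0]; exact hs_mono 0 k (Nat.zero_le _) (by omega)
        linarith
      rw [← hgi i] at h2
      have := hg i
      nlinarith
    have hcv := hsub (T k) hTne hTnu hTpos
    have h2 : 0 ≤ Δ k := le_of_lt hΔpos
    calc 2 * cheeger W * (Δ k * vol W (T k)) = Δ k * (2 * (cheeger W * vol W (T k))) := by ring
      _ ≤ Δ k * (2 * cut W (T k)) := by
          apply mul_le_mul_of_nonneg_left _ h2
          linarith

lemma dmin_le (i : Fin n) : (⨅ i, deg W i) ≤ deg W i :=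
  ciInf_le (Set.finite_range (deg W)).bddBelow i

/-- Cauchy–Schwarz step -/
lemma cs_step (hsymm : W.IsSymm) (hw : ∀ i j, 0 ≤ W i j) (g : Fin n → ℝ) (hg : ∀ i, 0 ≤ g i) :
    (∑ i, ∑ j, W i j * |g i ^ 2 - g j ^ 2|) ^ 2
      ≤ (2 * (g ⬝ᵥ (lap W *ᵥ g))) * (4 * ∑ i, deg W i * g i ^ 2) := by
  have hsym : ∀ i j, W j i = W i j := fun i j => (congrFun (congrFun hsymm.eq j) i).symm
  set F : Fin n × Fin n → ℝ := fun p => Real.sqrt (W p.1 p.2) * |g p.1 - g p.2| with hF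
  set G : Fin n × Fin n → ℝ := fun p => Real.sqrt (W p.1 p.2) * (g p.1 + g p.2) with hG
  have key := Finset.sum_mul_sq_le_sq_mul_sq (univ ×ˢ univ) F G
  have e1 : ∑ p ∈ univ ×ˢ univ, F p * G p = ∑ i, ∑ j, W i j * |g i ^ 2 - g j ^ 2| := by
    rw [Finset.sum_product]
    refine Finset.sum_congr rfl fun i _ => Finset.sum_congr rfl fun j _ => ?_
    rw [hF, hG]
    have h1 : Real.sqrt (W i j) * |g i - g j| * (Real.sqrt (W i j) * (g i + g j))
        = W i j * (|g i - g j| * (g i + g j)) := by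
      rw [show Real.sqrt (W i j) * |g i - g j| * (Real.sqrt (W i j) * (g i + g j))
          = (Real.sqrt (W i j) * Real.sqrt (W i j)) * (|g i - g j| * (g i + g j)) from by ring,
        Real.mul_self_sqrt (hw i j)]
    rw [h1]
    congr 1
    have h2 : |g i ^ 2 - g j ^ 2| = |(g i - g j) * (g i + g j)| := by ring_nf
    rw [h2, abs_mul, abs_of_nonneg (by have := hg i; have := hg j; linarith : 0 ≤ g i + g j)]
  have e2 : ∑ p ∈ univ ×ˢ univ, F p ^ 2 = 2 * (g ⬝ᵥ (lap W *ᵥ g)) := by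
    rw [Finset.sum_product, dot_lap_eq hsymm]
    rw [show (2:ℝ) * ((1/2) * ∑ i, ∑ j, W i j * (g i - g j)^2)
        = ∑ i, ∑ j, W i j * (g i - g j)^2 from by ring]
    refine Finset.sum_congr rfl fun i _ => Finset.sum_congr rfl fun j _ => ?_
    rw [hF, mul_pow, Real.sq_sqrt (hw i j), sq_abs]
  have e3 : ∑ p ∈ univ ×ˢ univ, G p ^ 2 ≤ 4 * ∑ i, deg W i * g i ^ 2 := by
    have h1 : ∀ p : Fin n × Fin n, G p ^ 2 ≤ W p.1 p.2 * (2 * g p.1 ^2 + 2 * g p.2 ^2) := by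
      intro p
      rw [hG, mul_pow, Real.sq_sqrt (hw p.1 p.2)]
      have : (g p.1 + g p.2)^2 ≤ 2 * g p.1 ^2 + 2 * g p.2 ^2 := by nlinarith [sq_nonneg (g p.1 - g p.2)]
      exact mul_le_mul_of_nonneg_left this (hw p.1 p.2)
    calc ∑ p ∈ univ ×ˢ univ, G p ^ 2
        ≤ ∑ p ∈ univ ×ˢ univ, W p.1 p.2 * (2 * g p.1 ^2 + 2 * g p.2 ^2) :=
          Finset.sum_le_sum fun p _ => h1 p
      _ = 4 * ∑ i, deg W i * g i ^ 2 := by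
          rw [Finset.sum_product]
          have h2 : ∑ i, ∑ j, W i j * (2 * g i ^2 + 2 * g j ^2)
              = 2 * (∑ i, ∑ j, W i j * g i ^2) + 2 * (∑ i, ∑ j, W i j * g j ^2) := by
            rw [Finset.mul_sum, Finset.mul_sum, ← Finset.sum_add_distrib]
            refine Finset.sum_congr rfl fun i _ => ?_
            rw [Finset.mul_sum, Finset.mul_sum, ← Finset.sum_add_distrib]
            refine Finset.sum_congr rfl fun j _ => by ring
          have h3 : ∑ i, ∑ j, W i j * g j ^2 = ∑ i, ∑ j, W i j * g i ^2 := by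
            rw [Finset.sum_comm]
            exact Finset.sum_congr rfl fun i _ => Finset.sum_congr rfl fun j _ => by rw [hsym]
          have h4 : ∑ i, ∑ j, W i j * g i ^2 = ∑ i, deg W i * g i ^ 2 := by
            refine Finset.sum_congr rfl fun i _ => ?_
            rw [deg, Finset.sum_mul]
          rw [h2, h3, h4]
          ring
  calc (∑ i, ∑ j, W i j * |g i ^ 2 - g j ^ 2|) ^ 2
      = (∑ p ∈ univ ×ˢ univ, F p * G p) ^ 2 := by rw [e1]
    _ ≤ (∑ p ∈ univ ×ˢ univ, F p ^ 2) * (∑ p ∈ univ ×ˢ univ, G p ^ 2) := key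
    _ ≤ (2 * (g ⬝ᵥ (lap W *ᵥ g))) * (4 * ∑ i, deg W i * g i ^ 2) := by
        rw [e2]
        apply mul_le_mul_of_nonneg_left e3
        have : 0 ≤ ∑ p ∈ univ ×ˢ univ, F p ^ 2 := Finset.sum_nonneg fun p _ => sq_nonneg _
        rw [e2] at this
        linarith

lemma lower_aux (hsymm : W.IsSymm) (hw : ∀ i j, 0 ≤ W i j) (hn : 2 ≤ n)
    {lam : ℝ} (hlam : 0 < lam) {f : Fin n → ℝ} (hf : lap W *ᵥ f = lam • f)
    (hP : (univ.filter (fun i => 0 < f i)).Nonempty)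
    (hN : (univ.filter (fun i => f i < 0)).Nonempty)
    (hvol : vol W (univ.filter (fun i => 0 < f i)) ≤ vol W (univ.filter (fun i => f i < 0))) :
    (⨅ i, deg W i) * cheeger W ^ 2 ≤ 2 * lam := by
  classical
  rcases le_or_gt (⨅ i, deg W i) 0 with hdm | hdm
  · have hch := cheeger_nonneg hn hw
    nlinarith
  set g : Fin n → ℝ := fun i => max (f i) 0 with hgdef
  have hg : ∀ i, 0 ≤ g i := fun i => le_max_right _ _
  have hg0 : ∃ i, g i = 0 := by
    obtain ⟨i, hi⟩ := hN
    rw [Finset.mem_filter] at hi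
    exact ⟨i, max_eq_right (le_of_lt hi.2)⟩
  have hgf : ∀ i, g i * f i = g i * g i := by
    intro i
    rcases le_or_gt (f i) 0 with h | h
    · rw [hgdef]; simp [max_eq_right h]
    · rw [hgdef]; simp [max_eq_left (le_of_lt h)]
  have hfg : ∀ i, f i ≤ g i := fun i => le_max_left _ _
  have hgne : g ≠ 0 := by
    obtain ⟨i, hi⟩ := hP
    rw [Finset.mem_filter] at hi
    intro h
    have := congrFun h i
    simp only [hgdef, Pi.zero_apply] at this
    rw [max_eq_left (le_of_lt hi.2)] at this
    linarith [hi.2]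
  -- K1 : q(g) ≤ lam * (g ⬝ᵥ g)
  have hK1 : g ⬝ᵥ (lap W *ᵥ g) ≤ lam * (g ⬝ᵥ g) := by
    have h1 : g ⬝ᵥ (lap W *ᵥ f) = lam * (g ⬝ᵥ g) := by
      rw [hf, dotProduct_smul, smul_eq_mul]
      congr 1
      rw [dotProduct, dotProduct]
      exact Finset.sum_congr rfl fun i _ => hgf i
    have h2 : g ⬝ᵥ (lap W *ᵥ f) - g ⬝ᵥ (lap W *ᵥ g)
        = ∑ i, ∑ j, W i j * (g i * (g j - f j)) := by
      rw [dotProduct, dotProduct, ← Finset.sum_sub_distrib]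
      have h3 : ∀ i, g i * (lap W *ᵥ f) i - g i * (lap W *ᵥ g) i
          = ∑ j, W i j * (g i * (g j - f j)) := by
        intro i
        rw [lap_mulVec, lap_mulVec]
        have h4 : g i * (deg W i * f i - ∑ j, W i j * f j)
            - g i * (deg W i * g i - ∑ j, W i j * g j)
            = deg W i * (g i * f i - g i * g i)
              + (g i * ∑ j, W i j * g j - g i * ∑ j, W i j * f j) := by ring
        rw [h4, hgf i]
        simp only [sub_self, mul_zero, zero_add]
        rw [Finset.mul_sum, Finset.mul_sum, ← Finset.sum_sub_distrib]
        exact Finset.sum_congr rfl fun j _ => by ring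
      exact Finset.sum_congr rfl fun i _ => h3 i
    have h5 : 0 ≤ ∑ i, ∑ j, W i j * (g i * (g j - f j)) :=
      Finset.sum_nonneg fun i _ => Finset.sum_nonneg fun j _ =>
        mul_nonneg (hw i j) (mul_nonneg (hg i) (by linarith [hfg j]))
    linarith [h1, h2.symm.le]
  -- sub-cut property
  have hsub : ∀ T : Finset (Fin n), T.Nonempty → T ≠ Finset.univ →
      (∀ i ∈ T, 0 < g i) → cheeger W * vol W T ≤ cut W T := by
    intro T hT1 hT2 hT3
    apply cheeger_mul_vol_le hw hn T hT1 hT2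
    have hTP : T ⊆ univ.filter (fun i => 0 < f i) := by
      intro i hi
      rw [Finset.mem_filter]
      refine ⟨Finset.mem_univ i, ?_⟩
      have := hT3 i hi
      rw [hgdef] at this
      simp only [lt_max_iff] at this
      rcases this with h | h
      · exact h
      · linarith
    have hNP : univ.filter (fun i => f i < 0) ⊆ Tᶜ := by
      intro i hi
      rw [Finset.mem_filter] at hi
      rw [Finset.mem_compl]
      intro hiT
      have := hT3 i hiT
      rw [hgdef, lt_max_iff] at this
      rcases this with h | h
      · linarith [hi.2]
      · linarith
    calc vol W T ≤ vol W (univ.filter (fun i => 0 < f i)) := vol_mono hw hTP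
      _ ≤ vol W (univ.filter (fun i => f i < 0)) := hvol
      _ ≤ vol W Tᶜ := vol_mono hw hNP
  have hsweep := sweep hsymm hw hn g hg hg0 hsub
  have hcs := cs_step hsymm hw g hg
  -- combine
  set S := ∑ i, deg W i * g i ^ 2 with hS
  set B := ∑ i, ∑ j, W i j * |g i ^ 2 - g j ^ 2| with hB
  set q := g ⬝ᵥ (lap W *ᵥ g) with hq
  have hgg : 0 < g ⬝ᵥ g := dot_self_pos hgne
  have hSg : (⨅ i, deg W i) * (g ⬝ᵥ g) ≤ S := by
    rw [hS, dotProduct]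
    rw [Finset.mul_sum]
    apply Finset.sum_le_sum
    intro i _
    have h1 : g i * g i = g i ^ 2 := by ring
    rw [h1]
    exact mul_le_mul_of_nonneg_right (dmin_le i) (sq_nonneg _)
  have hSpos : 0 < S := lt_of_lt_of_le (by positivity) hSg
  have hch := cheeger_nonneg hn hw
  -- (2 h S)^2 ≤ B^2 ≤ 2q·4S ≤ 8 lam (g⬝g) S ≤ 8 lam S²/dmin
  have h2hS : 0 ≤ 2 * cheeger W * S := by positivity
  have hsq : (2 * cheeger W * S)^2 ≤ (2 * q) * (4 * S) := by
    calc (2 * cheeger W * S)^2 ≤ B^2 := by nlinarith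
      _ ≤ (2 * q) * (4 * S) := hcs
  have hq_le : q ≤ lam * (g ⬝ᵥ g) := hK1
  have hgg_le : g ⬝ᵥ g ≤ S / (⨅ i, deg W i) := by
    rw [le_div_iff₀ hdm]
    linarith [hSg]
  -- 4 h² S² ≤ 8 q S ≤ 8 lam (g⬝g) S ≤ 8 lam S² / dmin
  have final : 4 * cheeger W ^2 * S^2 ≤ 8 * lam * S^2 / (⨅ i, deg W i) := by
    have h1 : (2 * cheeger W * S)^2 = 4 * cheeger W^2 * S^2 := by ring
    have h2 : (2*q)*(4*S) = 8 * q * S := by ring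
    have h3 : 8 * q * S ≤ 8 * (lam * (g ⬝ᵥ g)) * S := by nlinarith
    have h4 : 8 * (lam * (g ⬝ᵥ g)) * S ≤ 8 * (lam * (S / (⨅ i, deg W i))) * S := by
      have := mul_le_mul_of_nonneg_left hgg_le (le_of_lt hlam)
      nlinarith
    have h5 : 8 * (lam * (S / (⨅ i, deg W i))) * S = 8 * lam * S^2 / (⨅ i, deg W i) := by
      field_simp
    linarith [hsq, h1.symm.le]
  have hfinal2 : cheeger W ^2 * (⨅ i, deg W i) ≤ 2 * lam := by
    have h6 : 8 * lam * S^2 / (⨅ i, deg W i) * (⨅ i, deg W i) = 8 * lam * S^2 :=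
      div_mul_cancel₀ _ (ne_of_gt hdm)
    have h7 := mul_le_mul_of_nonneg_right final (le_of_lt hdm)
    rw [h6] at h7
    nlinarith [mul_pos hSpos hSpos]
  linarith [hfinal2]

lemma cheeger_eq_zero_of_nonconst (hw : ∀ i j, 0 ≤ W i j) (hn : 2 ≤ n)
    {x : Fin n → ℝ} (hker : ∀ i j, W i j * (x i - x j)^2 = 0)
    {i0 j0 : Fin n} (hne : x i0 ≠ x j0) : cheeger W ≤ 0 := by
  classical
  set X : Finset (Fin n) := univ.filter (fun i => x i = x i0) with hX
  have hX1 : X.Nonempty := ⟨i0, by simp [hX]⟩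
  have hX2 : X ≠ Finset.univ := by
    intro h
    have : j0 ∈ X := h ▸ Finset.mem_univ _
    rw [hX, Finset.mem_filter] at this
    exact hne this.2.symm
  have hcut : cut W X = 0 := by
    rw [cut]
    apply Finset.sum_eq_zero
    intro i hi
    apply Finset.sum_eq_zero
    intro j hj
    rw [hX, Finset.mem_filter] at hi
    have hj' : x j ≠ x i0 := by
      have := Finset.mem_compl.mp hj
      rw [hX, Finset.mem_filter] at this
      intro hc
      exact this ⟨Finset.mem_univ j, hc⟩
    have hij : x i ≠ x j := by rw [hi.2]; exact fun h => hj' h.symm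
    rcases mul_eq_zero.mp (hker i j) with h | h
    · exact h
    · exact absurd (sub_eq_zero.mp (sq_eq_zero_iff.mp h)) hij
  have := cheeger_le hw X hX1 hX2
  rw [hcut, zero_div] at this
  exact this

lemma lower_bound (hsymm : W.IsSymm) (hw : ∀ i j, 0 ≤ W i j)
    (hL : (lap W).IsHermitian) (hn : 2 ≤ n) {μ : Fin n → ℝ} (hmono : Monotone μ)
    (σ : Equiv.Perm (Fin n)) (hperm : hL.eigenvalues = μ ∘ σ) :
    (1 / 2) * (⨅ i, deg W i) * cheeger W ^ 2 ≤ μ ⟨1, hn⟩ := by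
  classical
  have hmunn := mu1_nonneg hsymm hw hL hn σ hperm
  rcases le_or_gt (⨅ i, deg W i) 0 with hdm | hdm
  · have h2 : (1/2) * (⨅ i, deg W i) * cheeger W ^ 2 ≤ 0 := by
      have := sq_nonneg (cheeger W)
      nlinarith
    linarith
  rcases eq_or_lt_of_le hmunn with hμ0 | hμpos
  · -- μ1 = 0 : cheeger must vanish
    have hch0 : cheeger W ≤ 0 := by
      set u : Fin n → ℝ := ⇑(hL.eigenvectorBasis (σ.symm ⟨0, by omega⟩)) with hu
      set f : Fin n → ℝ := ⇑(hL.eigenvectorBasis (σ.symm ⟨1, hn⟩)) with hf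
      have huu : u ⬝ᵥ u = 1 := by rw [hu, dot_eigen hL]; simp
      have hff : f ⬝ᵥ f = 1 := by rw [hf, dot_eigen hL]; simp
      have huf : u ⬝ᵥ f = 0 := by
        rw [hu, hf, dot_eigen hL]
        have : σ.symm ⟨0, by omega⟩ ≠ σ.symm ⟨1, hn⟩ := by
          intro h
          have := σ.symm.injective h
          simp at this
        simp [this]
      have hLu : lap W *ᵥ u = 0 := by
        rw [hu, hL.mulVec_eigenvectorBasis]
        have h1 : hL.eigenvalues (σ.symm ⟨0, by omega⟩) = 0 := by
          have h2 : hL.eigenvalues (σ.symm ⟨0, by omega⟩) = μ ⟨0, by omega⟩ := by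
            rw [hperm]; simp
          have h3 : μ ⟨0, by omega⟩ ≤ μ ⟨1, hn⟩ := hmono (by simp)
          have h4 := eig_nonneg hsymm hw hL (σ.symm ⟨0, by omega⟩)
          rw [h2] at h4 ⊢
          linarith [hμ0.symm.le, hμ0.le]
        rw [h1, zero_smul]
      have hLf : lap W *ᵥ f = 0 := by
        rw [hf, hL.mulVec_eigenvectorBasis]
        have h1 : hL.eigenvalues (σ.symm ⟨1, hn⟩) = 0 := by
          rw [hperm]; simp [← hμ0]
        rw [h1, zero_smul]
      have hkeru : ∀ i j, W i j * (u i - u j)^2 = 0 := by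
        have h1 : u ⬝ᵥ (lap W *ᵥ u) = 0 := by rw [hLu]; simp
        rw [dot_lap_eq hsymm] at h1
        have h2 : ∀ i ∈ univ, ∀ j ∈ (univ : Finset (Fin n)), (0:ℝ) ≤ W i j * (u i - u j)^2 :=
          fun i _ j _ => mul_nonneg (hw i j) (sq_nonneg _)
        have h3 : ∑ i, ∑ j, W i j * (u i - u j)^2 = 0 := by linarith
        intro i j
        have h4 := (Finset.sum_eq_zero_iff_of_nonneg (fun i _ =>
          Finset.sum_nonneg (fun j _ => h2 i (mem_univ i) j (mem_univ j)))).mp h3 i (mem_univ i)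
        exact (Finset.sum_eq_zero_iff_of_nonneg (fun j _ =>
          h2 i (mem_univ i) j (mem_univ j))).mp h4 j (mem_univ j)
      have hkerf : ∀ i j, W i j * (f i - f j)^2 = 0 := by
        have h1 : f ⬝ᵥ (lap W *ᵥ f) = 0 := by rw [hLf]; simp
        rw [dot_lap_eq hsymm] at h1
        have h2 : ∀ i j, (0:ℝ) ≤ W i j * (f i - f j)^2 :=
          fun i j => mul_nonneg (hw i j) (sq_nonneg _)
        have h3 : ∑ i, ∑ j, W i j * (f i - f j)^2 = 0 := by linarith
        intro i j
        have h4 := (Finset.sum_eq_zero_iff_of_nonneg (fun i _ =>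
          Finset.sum_nonneg (fun j _ => h2 i j))).mp h3 i (mem_univ i)
        exact (Finset.sum_eq_zero_iff_of_nonneg (fun j _ => h2 i j)).mp h4 j (mem_univ j)
      -- one of u, f is nonconstant
      by_cases hconst : ∀ i j : Fin n, u i = u j
      · -- then f must be nonconstant
        have hfnc : ∃ i j, f i ≠ f j := by
          by_contra h
          push_neg at h
          -- both constant: contradiction with orthonormality
          set i0 : Fin n := ⟨0, by omega⟩ with hi0
          have hu_const : ∀ i, u i = u i0 := fun i => hconst i i0
          have hf_const : ∀ i, f i = f i0 := fun i => h i i0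
          have e1 : u ⬝ᵥ f = (n : ℝ) * (u i0 * f i0) := by
            rw [dotProduct]
            rw [Finset.sum_congr rfl fun i _ => by rw [hu_const i, hf_const i]]
            rw [Finset.sum_const, Finset.card_univ, Fintype.card_fin, nsmul_eq_mul]
          have e2 : u ⬝ᵥ u = (n : ℝ) * (u i0 * u i0) := by
            rw [dotProduct]
            rw [Finset.sum_congr rfl fun i _ => by rw [hu_const i]]
            rw [Finset.sum_const, Finset.card_univ, Fintype.card_fin, nsmul_eq_mul]
          have e3 : f ⬝ᵥ f = (n : ℝ) * (f i0 * f i0) := by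
            rw [dotProduct]
            rw [Finset.sum_congr rfl fun i _ => by rw [hf_const i]]
            rw [Finset.sum_const, Finset.card_univ, Fintype.card_fin, nsmul_eq_mul]
          rw [e1] at huf
          rw [e2] at huu
          rw [e3] at hff
          have hn0 : (0:ℝ) < n := by positivity
          rcases mul_eq_zero.mp ((mul_eq_zero.mp huf).resolve_left (ne_of_gt hn0)) with h5 | h5
          · rw [h5] at huu; nlinarith
          · rw [h5] at hff; nlinarith
        obtain ⟨i1, j1, hne⟩ := hfnc
        exact cheeger_eq_zero_of_nonconst hw hn hkerf hne
      · push_neg at hconst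
        obtain ⟨i1, j1, hne⟩ := hconst
        exact cheeger_eq_zero_of_nonconst hw hn hkeru hne
    have hch := cheeger_nonneg hn hw
    have : cheeger W = 0 := le_antisymm hch0 hch
    rw [this]
    simpa using hmunn
  · -- μ1 > 0
    obtain ⟨f, hff, hLf⟩ := mu1_exists_eigvec hL hn σ hperm
    have hfsum : ∑ i, f i = 0 := by
      have h1 := sum_lap hsymm f
      rw [hLf] at h1
      have h2 : ∑ i, (μ ⟨1, hn⟩ • f) i = μ ⟨1, hn⟩ * ∑ i, f i := by
        rw [Finset.mul_sum]
        exact Finset.sum_congr rfl fun i _ => by simp [smul_eq_mul]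
      rw [h2] at h1
      rcases mul_eq_zero.mp h1 with h | h
      · exfalso; rw [h] at hμpos; exact lt_irrefl 0 hμpos
      · exact h
    have hfne : f ≠ 0 := by
      intro h
      rw [h] at hff
      simp [dotProduct] at hff
    have hP : (univ.filter (fun i => 0 < f i)).Nonempty := by
      rw [Finset.filter_nonempty_iff]
      by_contra h
      push_neg at h
      have hall : ∀ i ∈ univ, f i ≤ 0 := fun i hi => h i hi
      have := (Finset.sum_eq_zero_iff_of_nonpos hall).mp hfsum
      exact hfne (funext fun i => this i (mem_univ i))
    have hN : (univ.filter (fun i => f i < 0)).Nonempty := by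
      rw [Finset.filter_nonempty_iff]
      by_contra h
      push_neg at h
      have hall : ∀ i ∈ univ, 0 ≤ f i := fun i hi => h i hi
      have := (Finset.sum_eq_zero_iff_of_nonneg hall).mp hfsum
      exact hfne (funext fun i => this i (mem_univ i))
    have hkey : (⨅ i, deg W i) * cheeger W ^ 2 ≤ 2 * μ ⟨1, hn⟩ := by
      rcases le_total (vol W (univ.filter (fun i => 0 < f i)))
        (vol W (univ.filter (fun i => f i < 0))) with hv | hv
      · exact lower_aux hsymm hw hn hμpos hLf hP hN hv
      · -- use -f
        have hLf' : lap W *ᵥ (-f) = μ ⟨1, hn⟩ • (-f) := by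
          rw [Matrix.mulVec_neg, hLf, smul_neg]
        have hPf : univ.filter (fun i => 0 < (-f) i) = univ.filter (fun i => f i < 0) := by
          apply Finset.filter_congr
          intro i _
          simp [neg_pos]
        have hNf : univ.filter (fun i => (-f) i < 0) = univ.filter (fun i => 0 < f i) := by
          apply Finset.filter_congr
          intro i _
          simp
        have := lower_aux hsymm hw hn hμpos hLf' (by rw [hPf]; exact hN)
          (by rw [hNf]; exact hP) (by rw [hPf, hNf]; exact hv)
        exact this
    linarith [hkey]

end Rest
end Graph
end CheegerAux

/-- Lemma 3, Cheeger bounds: the spectral gap of the combinatorial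
Laplacian satisfies `(1/2) d_min h_G² ≤ λ₂(L) ≤ 2 d_max h_G`.
Here `μ` lists the eigenvalues of `L` with multiplicity in increasing order. -/
theorem stmt_13 {n : ℕ} (hn : 2 ≤ n) (wbar : ℝ) (hwbar : 0 < wbar)
    (W : Matrix (Fin n) (Fin n) ℝ)
    (hsymm : W.IsSymm) (hdiag : ∀ i, W i i = 0)
    (hW : ∀ i j, 0 ≤ W i j ∧ W i j ≤ wbar)
    (hL : (lap W).IsHermitian)
    (μ : Fin n → ℝ) (hmono : Monotone μ)
    (hperm : ∃ σ : Equiv.Perm (Fin n), hL.eigenvalues = μ ∘ σ) :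
    (1 / 2) * (⨅ i, deg W i) * cheeger W ^ 2 ≤ μ ⟨1, by omega⟩ ∧
      μ ⟨1, by omega⟩ ≤ 2 * (⨆ i, deg W i) * cheeger W := by
  obtain ⟨σ, hσ⟩ := hperm
  have hw : ∀ i j, 0 ≤ W i j := fun i j => (hW i j).1
  exact ⟨CheegerAux.lower_bound hsymm hw hL hn hmono σ hσ,
    CheegerAux.upper_bound hsymm hw hL hn hmono σ hσ⟩
end

section
/- The Friedkin–Johnsen dynamics contract polarization: for any weighted undirected graph with Laplacian L and any innate opinions s ∈ ℝⁿ, the expressed opinions z = (I+L)^{-1}·s satisfy P(z) ≤ P(s). -/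
open Matrix Finset

lemma pol_nonneg' {n : ℕ} (x : Fin n → ℝ) : 0 ≤ pol x :=
  Finset.sum_nonneg fun i _ => sq_nonneg _

lemma lap_expand {n : ℕ} (W : Matrix (Fin n) (Fin n) ℝ) (x : Fin n → ℝ) :
    x ⬝ᵥ (lap W *ᵥ x) = ∑ i, ∑ j, (W i j * x i ^ 2 - W i j * (x i * x j)) := by
  simp only [lap, mulVec, dotProduct, deg, Matrix.sub_apply,
    Matrix.diagonal_apply, ite_mul, zero_mul, sub_mul, Finset.sum_sub_distrib,
    Finset.sum_ite_eq, Finset.mem_univ, if_true]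
  rw [← Finset.sum_sub_distrib]
  refine Finset.sum_congr rfl fun i _ => ?_
  rw [mul_sub]
  congr 1
  · rw [show x i * ((∑ j, W i j) * x i) = (∑ j, W i j) * x i ^ 2 by ring, Finset.sum_mul]
  · rw [Finset.mul_sum]
    exact Finset.sum_congr rfl fun j _ => by ring

lemma lap_quad {n : ℕ} (W : Matrix (Fin n) (Fin n) ℝ)
    (hsym : ∀ i j, W j i = W i j) (hW : ∀ i j, 0 ≤ W i j) (x : Fin n → ℝ) :
    0 ≤ x ⬝ᵥ (lap W *ᵥ x) := by
  rw [lap_expand]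
  have swap : ∑ i, ∑ j, (W i j * x i ^ 2 - W i j * (x i * x j))
      = ∑ i, ∑ j, (W i j * x j ^ 2 - W i j * (x i * x j)) := by
    rw [Finset.sum_comm]
    exact Finset.sum_congr rfl fun j _ => Finset.sum_congr rfl fun i _ => by
      rw [hsym j i]; ring_nf
  have hXY : (∑ i, ∑ j, (W i j * x i ^ 2 - W i j * (x i * x j)))
      + (∑ i, ∑ j, (W i j * x j ^ 2 - W i j * (x i * x j)))
      = ∑ i, ∑ j, W i j * (x i - x j) ^ 2 := by
    rw [← Finset.sum_add_distrib]
    refine Finset.sum_congr rfl fun i _ => ?_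
    rw [← Finset.sum_add_distrib]
    exact Finset.sum_congr rfl fun j _ => by ring
  have hnn : 0 ≤ ∑ i, ∑ j, W i j * (x i - x j) ^ 2 :=
    Finset.sum_nonneg fun i _ => Finset.sum_nonneg fun j _ =>
      mul_nonneg (hW i j) (sq_nonneg _)
  linarith

/-- sum of (lap W *ᵥ x) is zero. -/
lemma lap_sum {n : ℕ} (W : Matrix (Fin n) (Fin n) ℝ)
    (hsym : ∀ i j, W j i = W i j) (x : Fin n → ℝ) :
    ∑ i, (lap W *ᵥ x) i = 0 := by
  simp only [lap, mulVec, dotProduct, deg, Matrix.sub_apply,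
    Matrix.diagonal_apply, ite_mul, zero_mul, sub_mul, Finset.sum_sub_distrib,
    Finset.sum_ite_eq, Finset.mem_univ, if_true]
  have : ∑ i, (∑ j, W i j) * x i = ∑ i, ∑ j, W i j * x i := by
    exact Finset.sum_congr rfl fun i _ => by rw [Finset.sum_mul]
  rw [this, Finset.sum_comm]
  rw [show (∑ j, ∑ i, W i j * x i) = ∑ i : Fin n, ∑ j, W i j * x j from
    Finset.sum_congr rfl fun j _ => Finset.sum_congr rfl fun i _ => by rw [hsym i j]]
  ring

lemma lap_const {n : ℕ} (W : Matrix (Fin n) (Fin n) ℝ) (c : ℝ) :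
    lap W *ᵥ (fun _ => c) = 0 := by
  funext i
  simp only [lap, mulVec, dotProduct, deg, Matrix.sub_apply,
    Matrix.diagonal_apply, ite_mul, zero_mul, sub_mul, Finset.sum_sub_distrib,
    Finset.sum_ite_eq, Finset.mem_univ, if_true] 
  simp only [Pi.zero_apply]
  rw [Finset.sum_mul]
  exact sub_eq_zero.mpr (Finset.sum_congr rfl fun j _ => rfl)

/-- the Friedkin–Johnsen dynamics contract polarization:
`P(z) ≤ P(s)` where `z = (I+L)⁻¹ s`. -/
theorem stmt_16 {n : ℕ} (hn : 2 ≤ n) (wbar : ℝ) (hwbar : 0 < wbar)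
    (W : Matrix (Fin n) (Fin n) ℝ)
    (hsymm : W.IsSymm) (hdiag : ∀ i, W i i = 0)
    (hW : ∀ i j, 0 ≤ W i j ∧ W i j ≤ wbar)
    (s : Fin n → ℝ)
    (z : Fin n → ℝ) (hz : z = (1 + lap W)⁻¹ *ᵥ s) :
    pol z ≤ pol s := by
  have hsym : ∀ i j, W j i = W i j := fun i j => by
    have := congrFun (congrFun hsymm i) j
    simpa [Matrix.transpose_apply] using this
  have hWnn : ∀ i j, 0 ≤ W i j := fun i j => (hW i j).1
  set A := (1 : Matrix (Fin n) (Fin n) ℝ) + lap W with hA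
  by_cases hu : IsUnit A.det
  · -- A z = s
    have hAz : A *ᵥ z = s := by
      rw [hz, mulVec_mulVec, Matrix.mul_nonsing_inv A hu, one_mulVec]
    -- sums agree
    have hsum : ∑ i, z i = ∑ i, s i := by
      have : ∀ i, s i = z i + (lap W *ᵥ z) i := by
        intro i
        rw [← hAz]
        simp [hA, add_mulVec, one_mulVec]
      calc ∑ i, z i = ∑ i, z i + ∑ i, (lap W *ᵥ z) i := by rw [lap_sum W hsym]; ring
        _ = ∑ i, (z i + (lap W *ᵥ z) i) := by rw [Finset.sum_add_distrib]
        _ = ∑ i, s i := Finset.sum_congr rfl fun i _ => (this i).symm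
    have hmean : mean z = mean s := by unfold mean; rw [hsum]
    -- A (ctr z) = ctr s
    have hctr : A *ᵥ ctr z = ctr s := by
      have : ctr z = z - (fun _ => mean z) := rfl
      rw [this, mulVec_sub, hAz]
      funext i
      simp only [hA, add_mulVec, one_mulVec, Pi.sub_apply, Pi.add_apply]
      rw [congrFun (lap_const W (mean z)) i]
      simp [ctr, hmean]
    -- quadratic bound: pol z ≤ ctr z ⬝ᵥ ctr s
    have hq : pol z ≤ ctr z ⬝ᵥ ctr s := by
      have h1 : ctr z ⬝ᵥ (A *ᵥ ctr z) = ctr z ⬝ᵥ ctr z + ctr z ⬝ᵥ (lap W *ᵥ ctr z) := by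
        rw [hA, add_mulVec, one_mulVec, dotProduct_add]
      have h2 := lap_quad W hsym hWnn (ctr z)
      have h3 : ctr z ⬝ᵥ ctr z = pol z := by
        simp [dotProduct, ctr, pol, sq]
      rw [hctr] at h1
      linarith [h1 ▸ le_refl (ctr z ⬝ᵥ ctr s), h2, h3 ▸ le_refl (pol z)]
    -- Cauchy–Schwarz
    have hcs : (ctr z ⬝ᵥ ctr s) ^ 2 ≤ pol z * pol s := by
      have h := Finset.sum_mul_sq_le_sq_mul_sq Finset.univ (ctr z) (ctr s)
      simpa [dotProduct, pol, ctr] using h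
    have h0z := pol_nonneg' z
    have h0s := pol_nonneg' s
    nlinarith [hq, hcs, h0z, h0s]
  · -- A not invertible: inverse is 0, z = 0
    have : A⁻¹ = 0 := Matrix.nonsing_inv_apply_not_isUnit A hu
    rw [this] at hz
    have hz0 : z = 0 := by rw [hz]; funext i; simp [mulVec]
    have : pol z = 0 := by
      simp [pol, hz0, mean]
    rw [this]; exact pol_nonneg' s
end
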